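/- Let f_t be a holomorphic family of rational maps of degree d > 1 on P^1, parameterized by t ∈ D*, such that for every t ∈ D* the map f_t is Möbius conjugate to a polynomial, and assume f_t → φ locally uniformly on P^1 \ {h} as t → 0, where φ is a rational map of degree d − 1 > 0 and h ∈ P^1. Let p_t ∈ P^1 denote the totally ramified superattracting fixed point of f_t (the preimage of ∞ under the conjugating Möbius map, where deg_{p_t} f_t = d). Then lim_{t→0} p_t = h. -/

import Mathlib

open Filter Topology Polynomial

/-- The chordal distance between the points `[v₁ : v₂]` and `[w₁ : w₂]` of `ℙ¹`, written in
homogeneous coordinates: `[v, w] = |v₁w₂ − v₂w₁| / (‖v‖‖w‖)`. -/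
noncomputable def chordalP1 (v w : ℂ × ℂ) : ℝ :=
  ‖(v.1 * w.2 - v.2 * w.1)‖ /
    (Real.sqrt (‖v.1‖ ^ 2 + ‖v.2‖ ^ 2) *
      Real.sqrt (‖w.1‖ ^ 2 + ‖w.2‖ ^ 2))

/-- Evaluation at `(z, w)` of the degree-`n` homogenization of a polynomial `P`. -/
noncomputable def homEval (P : Polynomial ℂ) (n : ℕ) (v : ℂ × ℂ) : ℂ :=
  ∑ i ∈ Finset.range (n + 1), P.coeff i * v.1 ^ i * v.2 ^ (n - i)

/-- Let `f_t = P_t/Q_t` be a holomorphic family of rational maps of degree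
`d > 1` on `ℙ¹`, parameterized by the punctured disk, such that each `f_t` is Möbius conjugate
to a polynomial — encoded by a totally ramified (superattracting) fixed point `p t`, i.e.
`P_t − p_t Q_t = c_t (X − p_t)^d` — and suppose `f_t → φ = A/B` of degree `d − 1` locally
uniformly on `ℙ¹ \ {h}` (in the chordal metric, via homogeneous coordinates).  Then
`p_t → h` as `t → 0`. -/
noncomputable def pnorm (v : ℂ × ℂ) : ℝ :=
  Real.sqrt (‖v.1‖ ^ 2 + ‖v.2‖ ^ 2)

lemma pnorm_nonneg (v : ℂ × ℂ) : 0 ≤ pnorm v := Real.sqrt_nonneg _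

lemma pnorm_pos {v : ℂ × ℂ} (hv : v ≠ 0) : 0 < pnorm v := by
  rcases v with ⟨a, b⟩
  have hab : a ≠ 0 ∨ b ≠ 0 := by
    by_contra hc
    push_neg at hc
    exact hv (by simp [hc.1, hc.2, Prod.ext_iff])
  apply Real.sqrt_pos.2
  rcases hab with h | h
  · have := norm_pos_iff.mpr h
    positivity
  · have := norm_pos_iff.mpr h
    positivity

lemma pnorm_fst_le (v : ℂ × ℂ) : ‖v.1‖ ≤ pnorm v := by
  have h := Real.sqrt_le_sqrt (show ‖v.1‖ ^2 ≤ ‖v.1‖ ^ 2 + ‖v.2‖ ^2 from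
    le_add_of_nonneg_right (by positivity))
  rwa [Real.sqrt_sq (norm_nonneg _)] at h

lemma pnorm_snd_le (v : ℂ × ℂ) : ‖v.2‖ ≤ pnorm v := by
  have h := Real.sqrt_le_sqrt (show ‖v.2‖ ^2 ≤ ‖v.1‖ ^ 2 + ‖v.2‖ ^2 from
    le_add_of_nonneg_left (by positivity))
  rwa [Real.sqrt_sq (norm_nonneg _)] at h

lemma pnorm_le_add (v : ℂ × ℂ) : pnorm v ≤ ‖v.1‖ + ‖v.2‖ := by
  have h2 : ‖v.1‖ ^ 2 + ‖v.2‖ ^2 ≤ (‖v.1‖ + ‖v.2‖)^2 := by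
    nlinarith [norm_nonneg v.1, norm_nonneg v.2]
  have h := Real.sqrt_le_sqrt h2
  rwa [Real.sqrt_sq (by positivity)] at h

lemma chordalP1_eq (v w : ℂ × ℂ) :
    chordalP1 v w = ‖(v.1 * w.2 - v.2 * w.1)‖ / (pnorm v * pnorm w) := rfl

lemma chordal_cross_lt {v w : ℂ × ℂ} {ε : ℝ} (hv : v ≠ 0) (hw : w ≠ 0)
    (hc : chordalP1 v w < ε) :
    ‖(v.1 * w.2 - v.2 * w.1)‖ < ε * (pnorm v * pnorm w) := by
  have h1 : 0 < pnorm v * pnorm w := mul_pos (pnorm_pos hv) (pnorm_pos hw)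
  rw [chordalP1_eq, div_lt_iff₀ h1] at hc
  linarith

lemma pnorm_smul (a : ℂ) (v : ℂ × ℂ) :
    pnorm (a * v.1, a * v.2) = ‖a‖ * pnorm v := by
  rcases v with ⟨x, y⟩
  simp only [pnorm, norm_mul]
  rw [show (‖a‖ * ‖x‖)^2 + (‖a‖ * ‖y‖)^2
      = (‖a‖)^2 * ((‖x‖)^2 + (‖y‖)^2) by ring,
    Real.sqrt_mul (by positivity), Real.sqrt_sq (by positivity)]

lemma chordal_smul {a : ℂ} (ha : a ≠ 0) (v w : ℂ × ℂ) :
    chordalP1 (a * v.1, a * v.2) w = chordalP1 v w := by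
  rw [chordalP1_eq, chordalP1_eq, pnorm_smul]
  have h1 : ‖((a*v.1, a*v.2).1 * w.2 - (a*v.1, a*v.2).2 * w.1)‖
      = ‖a‖ * ‖(v.1 * w.2 - v.2 * w.1)‖ := by
    rw [← norm_mul]; congr 1; ring
  rw [h1]
  have haa : (0:ℝ) < ‖a‖ := norm_pos_iff.mpr ha
  rw [mul_assoc, mul_div_mul_left _ _ (ne_of_gt haa)]

lemma chordal_swap (v w : ℂ × ℂ) :
    chordalP1 (v.2, v.1) (w.2, w.1) = chordalP1 v w := by
  rw [chordalP1_eq, chordalP1_eq]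
  have h1 : ‖(v.2 * w.1 - v.1 * w.2)‖ = ‖(v.1 * w.2 - v.2 * w.1)‖ := by
    rw [← norm_neg]; congr 1; ring
  have h2 : pnorm (v.2, v.1) = pnorm v := by simp [pnorm, add_comm]
  have h3 : pnorm (w.2, w.1) = pnorm w := by simp [pnorm, add_comm]
  simp only [h1, h2, h3]

section Poly
open Polynomial Finset

lemma no_common_root {f g : Polynomial ℂ} (h : IsCoprime f g) (z : ℂ) :
    ¬(f.eval z = 0 ∧ g.eval z = 0) := by
  rintro ⟨hf, hg⟩
  obtain ⟨u, v, huv⟩ := h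
  have := congrArg (Polynomial.eval z) huv
  simp [hf, hg] at this

/-- reversal of a polynomial relative to degree n -/
noncomputable def myrev (n : ℕ) (f : Polynomial ℂ) : Polynomial ℂ :=
  ∑ i ∈ Finset.range (n + 1), C (f.coeff (n - i)) * X ^ i

lemma natDegree_myrev_le (n : ℕ) (f : Polynomial ℂ) : (myrev n f).natDegree ≤ n := by
  apply Polynomial.natDegree_sum_le_of_forall_le
  intro i hi
  calc (C (f.coeff (n - i)) * X ^ i).natDegree ≤ i := by
        apply le_trans (Polynomial.natDegree_C_mul_le _ _)
        simp
    _ ≤ n := by simpa using Nat.lt_succ_iff.mp (Finset.mem_range.mp hi)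

lemma eval_myrev (n : ℕ) (f : Polynomial ℂ) (z : ℂ) :
    (myrev n f).eval z = ∑ i ∈ Finset.range (n + 1), f.coeff (n - i) * z ^ i := by
  simp [myrev, Polynomial.eval_finset_sum]

lemma eval_myrev_zero (n : ℕ) (f : Polynomial ℂ) :
    (myrev n f).eval 0 = f.coeff n := by
  rw [eval_myrev]
  rw [Finset.sum_eq_single 0]
  · simp
  · intro i _ hi; simp [zero_pow hi]
  · simp

lemma coeff_myrev (n : ℕ) (f : Polynomial ℂ) (k : ℕ) (hk : k ≤ n) :
    (myrev n f).coeff k = f.coeff (n - k) := by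
  rw [myrev, Polynomial.finset_sum_coeff]
  rw [Finset.sum_eq_single k]
  · simp
  · intro i _ hik
    simp only [Polynomial.coeff_C_mul, Polynomial.coeff_X_pow, if_neg (Ne.symm hik), mul_zero]
  · intro hk'
    exact absurd (Finset.mem_range.mpr (Nat.lt_succ_of_le hk)) hk'

lemma myrev_eq_zero {n : ℕ} {f : Polynomial ℂ} (hf : f.natDegree ≤ n)
    (h : myrev n f = 0) : f = 0 := by
  ext k
  by_cases hk : k ≤ n
  · have := coeff_myrev n f (n - k) (Nat.sub_le _ _)
    rw [h, Nat.sub_sub_self hk] at this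
    simpa using this.symm
  · push_neg at hk
    simp [Polynomial.coeff_eq_zero_of_natDegree_lt (lt_of_le_of_lt hf hk)]

lemma eval_myrev_of_ne {n : ℕ} {f : Polynomial ℂ} (hf : f.natDegree ≤ n) {z : ℂ} (hz : z ≠ 0) :
    (myrev n f).eval z = z ^ n * f.eval z⁻¹ := by
  rw [eval_myrev, Polynomial.eval_eq_sum_range' (Nat.lt_succ_of_le hf)]
  rw [Finset.mul_sum, ← Finset.sum_range_reflect]
  apply Finset.sum_congr rfl
  intro i hi
  have hi' : i ≤ n := Nat.lt_succ_iff.mp (Finset.mem_range.mp hi)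
  have he : n + 1 - 1 - i = n - i := by omega
  rw [he, Nat.sub_sub_self hi']
  have : z ^ n = z ^ i * z ^ (n - i) := by rw [← pow_add, Nat.add_sub_cancel' hi']
  rw [this]
  field_simp [pow_ne_zero _ hz]
  rw [mul_assoc, ← mul_pow, mul_one_div_cancel hz, one_pow, mul_one]

lemma homEval_eval {f : Polynomial ℂ} {n : ℕ} (hf : f.natDegree ≤ n) (z : ℂ) :
    homEval f n (z, 1) = f.eval z := by
  rw [homEval, Polynomial.eval_eq_sum_range' (Nat.lt_succ_of_le hf)]
  simp

lemma homEval_myrev (f : Polynomial ℂ) (n : ℕ) (z : ℂ) :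
    homEval f n (1, z) = (myrev n f).eval z := by
  rw [homEval, eval_myrev, ← Finset.sum_range_reflect]
  apply Finset.sum_congr rfl
  intro i hi
  have hi' : i ≤ n := Nat.lt_succ_iff.mp (Finset.mem_range.mp hi)
  have he : n + 1 - 1 - i = n - i := by omega
  rw [he, Nat.sub_sub_self hi']
  simp

end Poly

section Step4

lemma step4 {p1 q1 a1 b1 : ℂ} {δB MA Mw ε : ℝ}
    (hδB : 0 < δB) (hε0 : 0 < ε) (hεMw : ε * Mw ≤ δB / 2)
    (hb : δB ≤ ‖b1‖) (ha : ‖a1‖ ≤ MA)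
    (hw : pnorm (a1, b1) ≤ Mw)
    (hne : ¬(p1 = 0 ∧ q1 = 0))
    (hch : chordalP1 (p1, q1) (a1, b1) < ε) :
    q1 ≠ 0 ∧ ‖(p1 / q1 - a1 / b1)‖ ≤ ε * (1 + (δB + 2 * MA) / δB) * Mw / δB := by
  have hb1 : b1 ≠ 0 := by
    intro hb1; rw [hb1] at hb; simp at hb; linarith
  have hvne : (p1, q1) ≠ (0, 0) := by
    intro hc
    exact hne ⟨congrArg Prod.fst hc, congrArg Prod.snd hc⟩
  have hv : ((p1, q1) : ℂ × ℂ) ≠ 0 := hvne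
  have hwne : ((a1, b1) : ℂ × ℂ) ≠ 0 := by
    intro hc
    exact hb1 (congrArg Prod.snd hc)
  have hcross := chordal_cross_lt hv hwne hch
  simp only at hcross
  -- basic quantities
  set np := ‖p1‖ with hnp
  set nq := ‖q1‖ with hnq
  have hMw0 : 0 < Mw := lt_of_lt_of_le (lt_of_lt_of_le hδB (le_trans hb (pnorm_snd_le (a1, b1)))) hw
  have hN : pnorm (p1, q1) ≤ np + nq := pnorm_le_add _
  have hcross2 : ‖(p1 * b1 - q1 * a1)‖ < ε * ((np + nq) * Mw) := by
    calc ‖(p1 * b1 - q1 * a1)‖ < ε * (pnorm (p1, q1) * pnorm (a1, b1)) := hcross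
      _ ≤ ε * ((np + nq) * Mw) := by
          apply mul_le_mul_of_nonneg_left _ hε0.le
          exact mul_le_mul hN hw (pnorm_nonneg _) (by positivity)
  have hq1 : q1 ≠ 0 := by
    intro hq0
    have hp0 : p1 ≠ 0 := fun hp0 => hne ⟨hp0, hq0⟩
    have hnp0 : 0 < np := norm_pos_iff.mpr hp0
    have hnq00 : nq = 0 := by rw [hnq, hq0, norm_zero]
    have he : p1 * b1 - q1 * a1 = p1 * b1 := by rw [hq0]; ring
    rw [he, norm_mul] at hcross2
    have h1 : np * δB ≤ np * ‖b1‖ := mul_le_mul_of_nonneg_left hb hnp0.le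
    have h2 : ε * ((np + nq) * Mw) ≤ np * (δB / 2) := by
      rw [hnq00, add_zero, show ε * (np * Mw) = np * (ε * Mw) by ring]
      exact mul_le_mul_of_nonneg_left hεMw hnp0.le
    nlinarith [mul_pos hnp0 hδB]
  have hnq0 : 0 < nq := norm_pos_iff.mpr hq1
  -- step (ii)
  have hMA0 : 0 ≤ MA := le_trans (norm_nonneg _) ha
  have hii : np ≤ nq * ((δB + 2 * MA) / δB) := by
    have h1 : np * δB ≤ np * ‖b1‖ := mul_le_mul_of_nonneg_left hb (norm_nonneg _)
    have h2 : np * ‖b1‖ = ‖(p1 * b1)‖ := (norm_mul _ _).symm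
    have h3 : ‖(p1 * b1)‖ ≤ ‖(p1 * b1 - q1 * a1)‖ + ‖(q1 * a1)‖ := by
      calc ‖(p1 * b1)‖ = ‖((p1 * b1 - q1 * a1) + q1 * a1)‖ := by ring_nf
        _ ≤ _ := norm_add_le _ _
    have h4 : ‖(q1 * a1)‖ ≤ nq * MA := by
      rw [norm_mul]; exact mul_le_mul_of_nonneg_left ha (norm_nonneg _)
    have h5 : ε * ((np + nq) * Mw) ≤ (np + nq) * (δB / 2) := by
      rw [show ε * ((np + nq) * Mw) = (np + nq) * (ε * Mw) by ring]
      apply mul_le_mul_of_nonneg_left hεMw (by positivity)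
    have h6 : np * δB ≤ (np + nq) * (δB / 2) + nq * MA := by nlinarith
    rw [mul_comm nq, div_mul_eq_mul_div, le_div_iff₀ hδB]
    nlinarith
  -- step (iii)
  refine ⟨hq1, ?_⟩
  have hdiff : p1 / q1 - a1 / b1 = (p1 * b1 - q1 * a1) / (q1 * b1) := div_sub_div _ _ hq1 hb1
  rw [hdiff, norm_div, norm_mul]
  rw [div_le_iff₀ (mul_pos hnq0 (lt_of_lt_of_le hδB hb))]
  calc ‖(p1 * b1 - q1 * a1)‖ ≤ ε * ((np + nq) * Mw) := hcross2.le
    _ ≤ ε * ((nq * ((δB + 2 * MA) / δB) + nq) * Mw) := by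
        apply mul_le_mul_of_nonneg_left _ hε0.le
        apply mul_le_mul_of_nonneg_right _ hMw0.le
        linarith
    _ = (ε * (1 + (δB + 2 * MA) / δB) * Mw / δB) * (nq * δB) := by
        field_simp; ring
    _ ≤ (ε * (1 + (δB + 2 * MA) / δB) * Mw / δB) * (nq * ‖b1‖) := by
        apply mul_le_mul_of_nonneg_left
        · exact mul_le_mul_of_nonneg_left hb hnq0.le
        · positivity

end Step4

section MinMod

lemma min_modulus {Q : Polynomial ℂ} {q : ℂ} {R : ℝ} (hR : 0 < R)
    (hQ : ∀ z ∈ Metric.closedBall q R, Polynomial.eval z Q ≠ 0)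
    (z0 : ℂ) (hz0 : z0 ∈ Metric.closedBall q R) :
    ∃ ζ ∈ Metric.sphere q R, ‖(Polynomial.eval ζ Q)‖ ≤ ‖(Polynomial.eval z0 Q)‖ := by
  have hsphere_sub : Metric.sphere q R ⊆ Metric.closedBall q R := Metric.sphere_subset_closedBall
  have hcont : ContinuousOn (fun z => ‖(Polynomial.eval z Q)⁻¹‖) (Metric.sphere q R) := by
    apply ContinuousOn.norm
    exact ContinuousOn.inv₀ (Q.continuous.continuousOn) (fun z hz => hQ z (hsphere_sub hz))
  obtain ⟨ζ, hζmem, hζmax⟩ := (isCompact_sphere q R).exists_isMaxOn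
    (NormedSpace.sphere_nonempty.mpr hR.le) hcont
  refine ⟨ζ, hζmem, ?_⟩
  have key : ‖(Polynomial.eval z0 Q)⁻¹‖ ≤ ‖(Polynomial.eval ζ Q)⁻¹‖ := by
    apply Complex.norm_le_of_forall_mem_frontier_norm_le (U := Metric.ball q R)
      (f := fun z => (Polynomial.eval z Q)⁻¹) Metric.isBounded_ball
    · constructor
      · exact DifferentiableOn.inv Q.differentiable.differentiableOn
          (fun z hz => hQ z (Metric.ball_subset_closedBall hz))
      · rw [closure_ball q hR.ne']
        exact ContinuousOn.inv₀ Q.continuous.continuousOn hQ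
    · intro z hz
      rw [frontier_ball q hR.ne'] at hz
      exact hζmax hz
    · rwa [closure_ball q hR.ne']
  have h0 : Polynomial.eval z0 Q ≠ 0 := hQ z0 hz0
  have hζ0 : Polynomial.eval ζ Q ≠ 0 := hQ ζ (hsphere_sub hζmem)
  rw [norm_inv, norm_inv] at key
  have := inv_anti₀ (inv_pos.mpr (norm_pos_iff.mpr h0)) key
  simp only [inv_inv] at this
  simpa using this

end MinMod

section Key
open Polynomial Filter

set_option maxHeartbeats 2000000 in
lemma key_lemma {d : ℕ} (hd : 1 < d) (q : ℂ) (A₀ B₀ : Polynomial ℂ)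
    (hψ : A₀ - C q * B₀ ≠ 0) (hψd : (A₀ - C q * B₀).natDegree < d)
    (hAB : ∀ z : ℂ, ¬(A₀.eval z = 0 ∧ B₀.eval z = 0))
    (L : Filter ℂ) [L.NeBot]
    (P Q : ℂ → Polynomial ℂ) (p c : ℂ → ℂ)
    (hPQroot : ∀ᶠ t in L, ∀ z : ℂ, ¬((P t).eval z = 0 ∧ (Q t).eval z = 0))
    (hc : ∀ᶠ t in L, c t ≠ 0)
    (hid : ∀ᶠ t in L, ∀ z : ℂ, (P t).eval z - p t * (Q t).eval z = c t * (z - p t) ^ d)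
    (hp : Filter.Tendsto p L (nhds q))
    (R₁ : ℝ) (hR₁ : 0 < R₁)
    (hconv : ∀ ε : ℝ, 0 < ε → ∀ᶠ t in L, ∀ z ∈ Metric.closedBall q R₁,
      chordalP1 ((P t).eval z, (Q t).eval z) (A₀.eval z, B₀.eval z) < ε) :
    False := by
  set ψ : Polynomial ℂ := A₀ - C q * B₀ with hψdef
  have hd0 : 0 < d := lt_trans one_pos hd
  have hpball : ∀ᶠ t in L, p t ∈ Metric.closedBall q R₁ :=
    hp (Metric.closedBall_mem_nhds q hR₁)
  have hevψ : ∀ z : ℂ, ψ.eval z = A₀.eval z - q * B₀.eval z := by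
    intro z; simp [hψdef]
  -- Step 2 : ψ(q) = 0 and B₀(q) ≠ 0
  have hχev : ∀ ε : ℝ, 0 < ε → ∀ᶠ t in L,
      chordalP1 (p t, 1) (A₀.eval (p t), B₀.eval (p t)) < ε := by
    intro ε hε
    filter_upwards [hconv ε hε, hid, hPQroot, hpball] with t hconv' hid' hroot' hball'
    have h1 := hconv' (p t) hball'
    have hfix : (P t).eval (p t) = (Q t).eval (p t) * p t := by
      have h2 := hid' (p t)
      simp only [sub_self, zero_pow hd0.ne', mul_zero] at h2
      linear_combination h2
    have hQp : (Q t).eval (p t) ≠ 0 := by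
      intro h0
      exact hroot' (p t) ⟨by rw [hfix, h0, zero_mul], h0⟩
    have hsm := chordal_smul (a := (Q t).eval (p t)) hQp ((p t, 1))
      ((A₀.eval (p t), B₀.eval (p t)))
    simp only [mul_one] at hsm
    rw [hfix, show (Q t).eval (p t) * p t = ((Q t).eval (p t) * (p t, (1:ℂ)).1) by rfl] at h1
    rwa [hsm] at h1
  -- the chordal function χ
  set χ : ℂ → ℝ := fun z => chordalP1 (z, 1) (A₀.eval z, B₀.eval z) with hχdef
  have hχcont : ContinuousAt χ q := by
    have hχeq : χ = fun z => ‖(z * B₀.eval z - 1 * A₀.eval z)‖ /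
        (Real.sqrt (‖z‖ ^ 2 + ‖(1:ℂ)‖ ^ 2) *
          Real.sqrt (‖(A₀.eval z)‖ ^ 2 + ‖(B₀.eval z)‖ ^ 2)) := rfl
    rw [hχeq]
    have hnum : Continuous fun z : ℂ => ‖(z * B₀.eval z - 1 * A₀.eval z)‖ :=
      continuous_norm.comp
        ((continuous_id.mul B₀.continuous).sub (continuous_const.mul A₀.continuous))
    have hden : Continuous fun z : ℂ =>
        Real.sqrt (‖z‖ ^ 2 + ‖(1:ℂ)‖ ^ 2) *
          Real.sqrt (‖(A₀.eval z)‖ ^ 2 + ‖(B₀.eval z)‖ ^ 2) := by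
      apply Continuous.mul
      · exact Real.continuous_sqrt.comp
          (((continuous_norm.comp continuous_id).pow 2).add continuous_const)
      · exact Real.continuous_sqrt.comp
          (((continuous_norm.comp A₀.continuous).pow 2).add
            ((continuous_norm.comp B₀.continuous).pow 2))
    have hden0 : (Real.sqrt (‖q‖ ^ 2 + ‖(1:ℂ)‖ ^ 2) *
        Real.sqrt (‖(A₀.eval q)‖ ^ 2 + ‖(B₀.eval q)‖ ^ 2)) ≠ 0 := by
      have h1 : 0 < ‖q‖ ^ 2 + ‖(1:ℂ)‖ ^ 2 := by
        simp; positivity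
      have h2 : 0 < ‖(A₀.eval q)‖ ^ 2 + ‖(B₀.eval q)‖ ^ 2 := by
        rcases (not_and_or.mp (hAB q)) with h | h
        · have := norm_pos_iff.mpr h; positivity
        · have := norm_pos_iff.mpr h; positivity
      positivity
    exact (hnum.continuousAt).div (hden.continuousAt) hden0
  have hχq0 : χ q = 0 := by
    have hnn : 0 ≤ χ q := by
      rw [hχdef]
      apply div_nonneg (norm_nonneg _)
      exact mul_nonneg (Real.sqrt_nonneg _) (Real.sqrt_nonneg _)
    have hle : ∀ ε : ℝ, 0 < ε → χ q ≤ ε := by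
      intro ε hε
      apply le_of_tendsto (hχcont.tendsto.comp hp)
      filter_upwards [hχev ε hε] with t ht using ht.le
    rcases lt_or_eq_of_le hnn with hlt | heq
    · linarith [hle (χ q / 2) (by linarith)]
    · exact heq.symm
  have hψq : ψ.eval q = 0 := by
    have hden0 : 0 < Real.sqrt (‖q‖ ^ 2 + ‖(1:ℂ)‖ ^ 2) *
        Real.sqrt (‖(A₀.eval q)‖ ^ 2 + ‖(B₀.eval q)‖ ^ 2) := by
      have h1 : 0 < ‖q‖ ^ 2 + ‖(1:ℂ)‖ ^ 2 := by simp; positivity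
      have h2 : 0 < ‖(A₀.eval q)‖ ^ 2 + ‖(B₀.eval q)‖ ^ 2 := by
        rcases (not_and_or.mp (hAB q)) with h | h
        · have := norm_pos_iff.mpr h; positivity
        · have := norm_pos_iff.mpr h; positivity
      have := Real.sqrt_pos.mpr h1
      have := Real.sqrt_pos.mpr h2
      positivity
    have h3 : ‖(q * B₀.eval q - 1 * A₀.eval q)‖ = 0 := by
      have := hχq0
      rw [hχdef] at this
      simp only [chordalP1] at this
      exact (div_eq_zero_iff.mp this).resolve_right (ne_of_gt hden0)
    rw [hevψ]
    have h4 : q * B₀.eval q - 1 * A₀.eval q = 0 := by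
      simpa using (norm_eq_zero.mp h3)
    linear_combination -h4
  have hB₀q : B₀.eval q ≠ 0 := by
    intro h0
    apply hAB q
    constructor
    · have := hψq; rw [hevψ q, h0, mul_zero, sub_zero] at this; exact this
    · exact h0
  -- Step 1 : root multiplicity
  set m := rootMultiplicity q ψ with hmdef
  set ψ₁ := ψ /ₘ (X - C q) ^ m with hψ₁def
  have hfac : (X - C q) ^ m * ψ₁ = ψ := Polynomial.pow_mul_divByMonic_rootMultiplicity_eq ψ q
  have hψ₁q : ψ₁.eval q ≠ 0 := Polynomial.eval_divByMonic_pow_rootMultiplicity_ne_zero q hψ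
  have hmd : m < d := by
    have h1 : ((X - C q) ^ m : Polynomial ℂ).natDegree ≤ ψ.natDegree :=
      Polynomial.natDegree_le_of_dvd (Polynomial.pow_rootMultiplicity_dvd ψ q) hψ
    rw [Polynomial.natDegree_pow, Polynomial.natDegree_X_sub_C, mul_one] at h1
    exact lt_of_le_of_lt h1 hψd
  have hψevfac : ∀ z : ℂ, ψ.eval z = (z - q) ^ m * ψ₁.eval z := by
    intro z
    rw [← hfac]
    simp [Polynomial.eval_pow]
  -- Step 3 : radius R and constants
  have hopen : ∃ R' > 0, ∀ z ∈ Metric.closedBall q R', B₀.eval z ≠ 0 ∧ ψ₁.eval z ≠ 0 := by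
    have h1 : ContinuousAt (fun z => ‖(B₀.eval z)‖ * ‖(ψ₁.eval z)‖) q := by
      apply ContinuousAt.mul <;>
        exact continuous_norm.continuousAt.comp (Polynomial.continuous _).continuousAt
    have h2 : 0 < ‖(B₀.eval q)‖ * ‖(ψ₁.eval q)‖ :=
      mul_pos (norm_pos_iff.mpr hB₀q) (norm_pos_iff.mpr hψ₁q)
    have h3 : ∀ᶠ z in nhds q, 0 < ‖(B₀.eval z)‖ * ‖(ψ₁.eval z)‖ :=
      ContinuousAt.eventually_lt continuousAt_const h1 h2
    rw [Metric.nhds_basis_closedBall.eventually_iff] at h3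
    obtain ⟨R', hR'0, hball⟩ := h3
    refine ⟨R', hR'0, fun z hz => ?_⟩
    have h4 := hball hz
    constructor
    · intro h0; rw [h0, norm_zero, zero_mul] at h4; exact lt_irrefl 0 h4
    · intro h0; rw [h0, norm_zero, mul_zero] at h4; exact lt_irrefl 0 h4
  obtain ⟨R', hR'0, hR'⟩ := hopen
  set R := min R' R₁ with hRdef
  have hR0 : 0 < R := lt_min hR'0 hR₁
  have hRR₁ : R ≤ R₁ := min_le_right _ _
  have hSsub : Metric.closedBall q R ⊆ Metric.closedBall q R₁ :=
    Metric.closedBall_subset_closedBall hRR₁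
  have hSsub' : Metric.closedBall q R ⊆ Metric.closedBall q R' :=
    Metric.closedBall_subset_closedBall (min_le_left _ _)
  have hScompact : IsCompact (Metric.closedBall q R) := isCompact_closedBall q R
  have hSne : (Metric.closedBall q R).Nonempty := ⟨q, Metric.mem_closedBall_self hR0.le⟩
  -- constants
  obtain ⟨zB, hzB, hminB⟩ := hScompact.exists_isMinOn hSne
    ((continuous_norm.comp B₀.continuous).continuousOn)
  set δB := ‖(B₀.eval zB)‖ with hδBdef
  have hδB0 : 0 < δB := norm_pos_iff.mpr (hR' zB (hSsub' hzB)).1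
  have hδB : ∀ z ∈ Metric.closedBall q R, δB ≤ ‖(B₀.eval z)‖ :=
    fun z hz => hminB hz
  obtain ⟨zψ, hzψ, hminψ⟩ := hScompact.exists_isMinOn hSne
    ((continuous_norm.comp ψ₁.continuous).continuousOn)
  set δψ := ‖(ψ₁.eval zψ)‖ with hδψdef
  have hδψ0 : 0 < δψ := norm_pos_iff.mpr (hR' zψ (hSsub' hzψ)).2
  have hδψ : ∀ z ∈ Metric.closedBall q R, δψ ≤ ‖(ψ₁.eval z)‖ :=
    fun z hz => hminψ hz
  obtain ⟨zMB, hzMB, hmaxB⟩ := hScompact.exists_isMaxOn hSne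
    ((continuous_norm.comp B₀.continuous).continuousOn)
  set MB := ‖(B₀.eval zMB)‖ with hMBdef
  have hMB : ∀ z ∈ Metric.closedBall q R, ‖(B₀.eval z)‖ ≤ MB :=
    fun z hz => hmaxB hz
  have hMB0 : 0 < MB := lt_of_lt_of_le hδB0 (hδB zMB hzMB |>.trans (le_refl _))
  obtain ⟨zMA, hzMA, hmaxA⟩ := hScompact.exists_isMaxOn hSne
    ((continuous_norm.comp A₀.continuous).continuousOn)
  set MA := ‖(A₀.eval zMA)‖ with hMAdef
  have hMA : ∀ z ∈ Metric.closedBall q R, ‖(A₀.eval z)‖ ≤ MA :=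
    fun z hz => hmaxA hz
  have hMA0 : 0 ≤ MA := norm_nonneg _
  obtain ⟨zMψ, hzMψ, hmaxψ⟩ := hScompact.exists_isMaxOn hSne
    ((continuous_norm.comp ψ₁.continuous).continuousOn)
  set Mψ := ‖(ψ₁.eval zMψ)‖ with hMψdef
  have hMψ : ∀ z ∈ Metric.closedBall q R, ‖(ψ₁.eval z)‖ ≤ Mψ :=
    fun z hz => hmaxψ hz
  have hMψ0 : 0 < Mψ := lt_of_lt_of_le hδψ0 (hδψ zMψ hzMψ)
  set Mw := MA + MB with hMwdef
  have hMw0 : 0 < Mw := by positivity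
  have hMw : ∀ z ∈ Metric.closedBall q R, pnorm (A₀.eval z, B₀.eval z) ≤ Mw := by
    intro z hz
    calc pnorm (A₀.eval z, B₀.eval z) ≤ ‖(A₀.eval z)‖ + ‖(B₀.eval z)‖ :=
          pnorm_le_add _
      _ ≤ MA + MB := add_le_add (hMA z hz) (hMB z hz)
  -- choices of r, κ, η
  set D1 := δψ / MB with hD1def
  have hD10 : 0 < D1 := by positivity
  set U₀ := Mψ * R ^ m / δB + 1 with hU₀def
  have hU₀0 : 0 < U₀ := by positivity
  set cstar := (R / 2) ^ d * D1 / (2 ^ (d + 1) * U₀) with hcstardef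
  have hcstar0 : 0 < cstar := by positivity
  set r := min (R / 2) (min 1 (cstar / 2)) with hrdef
  have hr0 : 0 < r := lt_min (by positivity) (lt_min one_pos (by positivity))
  have hrR2 : r ≤ R / 2 := min_le_left _ _
  have hr1 : r ≤ 1 := le_trans (min_le_right _ _) (min_le_left _ _)
  have hrcstar : r ≤ cstar / 2 := le_trans (min_le_right _ _) (min_le_right _ _)
  -- key numeric inequality
  have hkey : (2 * r) ^ d * U₀ < (R / 2) ^ d * (D1 * r ^ m / 2) := by
    have h1 : r ^ d ≤ r ^ m * r := by
      have : r ^ d = r ^ m * r ^ (d - m) := by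
        rw [← pow_add, Nat.add_sub_cancel' hmd.le]
      rw [this]
      apply mul_le_mul_of_nonneg_left _ (by positivity)
      calc r ^ (d - m) ≤ r ^ 1 := pow_le_pow_of_le_one hr0.le hr1 (by omega)
        _ = r := pow_one r
    calc (2 * r) ^ d * U₀ = 2 ^ d * r ^ d * U₀ := by rw [mul_pow]
      _ ≤ 2 ^ d * (r ^ m * r) * U₀ := by
          apply mul_le_mul_of_nonneg_right _ hU₀0.le
          exact mul_le_mul_of_nonneg_left h1 (by positivity)
      _ = r ^ m * (2 ^ d * r * U₀) := by ring
      _ ≤ r ^ m * (2 ^ d * (cstar / 2) * U₀) := by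
          apply mul_le_mul_of_nonneg_left _ (by positivity)
          apply mul_le_mul_of_nonneg_right _ hU₀0.le
          exact mul_le_mul_of_nonneg_left hrcstar (by positivity)
      _ = r ^ m * ((R / 2) ^ d * D1 / 4) := by
          rw [hcstardef]
          field_simp
          ring
      _ < r ^ m * ((R / 2) ^ d * D1 / 2) := by
          apply mul_lt_mul_of_pos_left _ (by positivity)
          have : 0 < (R / 2) ^ d * D1 := by positivity
          linarith
      _ = (R / 2) ^ d * (D1 * r ^ m / 2) := by ring
  set κ := min (1 / 2 : ℝ) (D1 * r ^ m / 4) with hκdef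
  have hκ0 : 0 < κ := lt_min (by norm_num) (by positivity)
  set η := min (min r (1 / 2 : ℝ)) (D1 * r ^ m / 4) with hηdef
  have hη0 : 0 < η := lt_min (lt_min hr0 (by norm_num)) (by positivity)
  have hηr : η ≤ r := le_trans (min_le_left _ _) (min_le_left _ _)
  have hηhalf : η ≤ 1 / 2 := le_trans (min_le_left _ _) (min_le_right _ _)
  have hηD : η ≤ D1 * r ^ m / 4 := min_le_right _ _
  have hκhalf : κ ≤ 1 / 2 := min_le_left _ _
  have hκD : κ ≤ D1 * r ^ m / 4 := min_le_right _ _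
  -- the tolerance for step4
  set C₁ := (δB + 2 * MA) / δB with hC₁def
  have hC₁0 : 0 < 1 + C₁ := by positivity
  set εtol := min (δB / (2 * Mw)) (κ * δB / ((1 + C₁) * Mw)) with hεtoldef
  have hεtol0 : 0 < εtol := lt_min (by positivity) (by positivity)
  have hεMw : εtol * Mw ≤ δB / 2 := by
    have h1 : εtol ≤ δB / (2 * Mw) := min_le_left _ _
    calc εtol * Mw ≤ δB / (2 * Mw) * Mw := mul_le_mul_of_nonneg_right h1 hMw0.le
      _ = δB / 2 := by field_simp
  have hεκ : εtol * (1 + C₁) * Mw / δB ≤ κ := by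
    have h1 : εtol ≤ κ * δB / ((1 + C₁) * Mw) := min_le_right _ _
    rw [div_le_iff₀ hδB0]
    calc εtol * (1 + C₁) * Mw ≤ (κ * δB / ((1 + C₁) * Mw)) * (1 + C₁) * Mw := by
          apply mul_le_mul_of_nonneg_right _ hMw0.le
          exact mul_le_mul_of_nonneg_right h1 hC₁0.le
      _ = κ * δB := by field_simp
  -- collect all eventual facts and pick a witness
  have hpη : ∀ᶠ t in L, dist (p t) q ≤ η :=
    hp (Metric.closedBall_mem_nhds q hη0)
  obtain ⟨t, h_all⟩ := ((hconv εtol hεtol0).and ((hid.and hPQroot).and (hc.and hpη))).exists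
  obtain ⟨hconv', ⟨hid', hroot'⟩, hct, hptη⟩ := h_all
  -- step 4 on the ball
  have hstep4 : ∀ z ∈ Metric.closedBall q R, (Q t).eval z ≠ 0 ∧
      ‖((P t).eval z / (Q t).eval z - A₀.eval z / B₀.eval z)‖ ≤ κ := by
    intro z hz
    have h4 := step4 (p1 := (P t).eval z) (q1 := (Q t).eval z)
      (a1 := A₀.eval z) (b1 := B₀.eval z)
      hδB0 hεtol0 hεMw (hδB z hz) (hMA z hz) (hMw z hz) (hroot' z) (hconv' z (hSsub hz))
    exact ⟨h4.1, le_trans h4.2 hεκ⟩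
  -- the basic identity for |Q|·|g − p|
  have hQg : ∀ z ∈ Metric.closedBall q R,
      ‖((Q t).eval z)‖ * ‖((P t).eval z / (Q t).eval z - p t)‖
        = ‖(c t)‖ * ‖(z - p t)‖ ^ d := by
    intro z hz
    have hQz := (hstep4 z hz).1
    have h5 := hid' z
    have h6 : (Q t).eval z * ((P t).eval z / (Q t).eval z - p t) = c t * (z - p t) ^ d := by
      field_simp
      linear_combination h5
    calc ‖((Q t).eval z)‖ * ‖((P t).eval z / (Q t).eval z - p t)‖
        = ‖((Q t).eval z * ((P t).eval z / (Q t).eval z - p t))‖ := (norm_mul _ _).symm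
      _ = ‖(c t * (z - p t) ^ d)‖ := by rw [h6]
      _ = ‖(c t)‖ * ‖(z - p t)‖ ^ d := by rw [norm_mul, norm_pow]
  -- φ − q in terms of ψ
  have hφ : ∀ z ∈ Metric.closedBall q R,
      ‖(A₀.eval z / B₀.eval z - q)‖
        = ‖(z - q)‖ ^ m * ‖(ψ₁.eval z)‖ / ‖(B₀.eval z)‖ := by
    intro z hz
    have hBz : B₀.eval z ≠ 0 := (hR' z (hSsub' hz)).1
    have h7 : A₀.eval z / B₀.eval z - q = ψ.eval z / B₀.eval z := by
      rw [hevψ]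
      field_simp
    rw [h7, norm_div, hψevfac, norm_mul, norm_pow]
  -- the inner point
  set zr : ℂ := q + (r : ℂ) with hzrdef
  have hzrq : zr - q = (r : ℂ) := by rw [hzrdef]; ring
  have hzrdist : dist zr q = r := by
    rw [Complex.dist_eq, hzrq, Complex.norm_real, Real.norm_eq_abs, abs_of_pos hr0]
  have hzrS : zr ∈ Metric.closedBall q R := by
    rw [Metric.mem_closedBall, hzrdist]; linarith
  have hdistp : ‖(p t - q)‖ ≤ η := by
    rw [← Complex.dist_eq]; exact hptη
  -- lower bound for |φ(zr) − q|
  have hφr : D1 * r ^ m ≤ ‖(A₀.eval zr / B₀.eval zr - q)‖ := by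
    rw [hφ zr hzrS, hzrq, Complex.norm_real, Real.norm_eq_abs, abs_of_pos hr0]
    rw [hD1def, div_mul_eq_mul_div]
    apply div_le_div₀ (by positivity) _ (norm_pos_iff.mpr (hR' zr (hSsub' hzrS)).1) (hMB zr hzrS)
    rw [mul_comm]
    exact mul_le_mul_of_nonneg_left (hδψ zr hzrS) (by positivity)
  -- lower bound for |g(zr) − p t|
  have htri_r : D1 * r ^ m / 2 ≤ ‖((P t).eval zr / (Q t).eval zr - p t)‖ := by
    have ht1 : ‖(A₀.eval zr / B₀.eval zr - q)‖
        ≤ ‖(A₀.eval zr / B₀.eval zr - (P t).eval zr / (Q t).eval zr)‖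
          + ‖((P t).eval zr / (Q t).eval zr - p t)‖ + ‖(p t - q)‖ := by
      calc ‖(A₀.eval zr / B₀.eval zr - q)‖
          ≤ ‖(A₀.eval zr / B₀.eval zr - p t)‖ + ‖(p t - q)‖ :=
            norm_sub_le_norm_sub_add_norm_sub _ _ _
        _ ≤ ‖(A₀.eval zr / B₀.eval zr - (P t).eval zr / (Q t).eval zr)‖
            + ‖((P t).eval zr / (Q t).eval zr - p t)‖ + ‖(p t - q)‖ := by
            have := norm_sub_le_norm_sub_add_norm_sub (A₀.eval zr / B₀.eval zr)
              ((P t).eval zr / (Q t).eval zr) (p t)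
            linarith
    have ht2 : ‖(A₀.eval zr / B₀.eval zr - (P t).eval zr / (Q t).eval zr)‖ ≤ κ := by
      rw [show A₀.eval zr / B₀.eval zr - (P t).eval zr / (Q t).eval zr
          = -((P t).eval zr / (Q t).eval zr - A₀.eval zr / B₀.eval zr) by ring, norm_neg]
      exact (hstep4 zr hzrS).2
    linarith [hφr, hκD, hηD, hdistp]
  -- inner inequality
  have hinner : ‖((Q t).eval zr)‖ * (D1 * r ^ m / 2)
      ≤ ‖(c t)‖ * (2 * r) ^ d := by
    calc ‖((Q t).eval zr)‖ * (D1 * r ^ m / 2)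
        ≤ ‖((Q t).eval zr)‖
            * ‖((P t).eval zr / (Q t).eval zr - p t)‖ :=
          mul_le_mul_of_nonneg_left htri_r (norm_nonneg _)
      _ = ‖(c t)‖ * ‖(zr - p t)‖ ^ d := hQg zr hzrS
      _ ≤ ‖(c t)‖ * (2 * r) ^ d := by
          apply mul_le_mul_of_nonneg_left _ (norm_nonneg _)
          apply pow_le_pow_left₀ (norm_nonneg _)
          calc ‖(zr - p t)‖
              ≤ ‖(zr - q)‖ + ‖(q - p t)‖ := norm_sub_le_norm_sub_add_norm_sub _ _ _
            _ ≤ r + η := by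
                rw [hzrq, Complex.norm_real, Real.norm_eq_abs, abs_of_pos hr0]
                have : ‖(q - p t)‖ = ‖(p t - q)‖ := by
                  rw [show q - p t = -(p t - q) by ring, norm_neg]
                linarith [hdistp, this.le, this.ge]
            _ ≤ 2 * r := by linarith
  -- outer point from the minimum modulus principle
  obtain ⟨ζ, hζsph, hζle⟩ := min_modulus hR0 (fun z hz => (hstep4 z hz).1) zr hzrS
  have hζS : ζ ∈ Metric.closedBall q R := Metric.sphere_subset_closedBall hζsph
  have hζdist : ‖(ζ - q)‖ = R := by
    rw [← Complex.dist_eq]; exact hζsph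
  -- upper bound for |g(ζ) − p t|
  have hφζ : ‖(A₀.eval ζ / B₀.eval ζ - q)‖ ≤ Mψ * R ^ m / δB := by
    rw [hφ ζ hζS, hζdist]
    rw [show Mψ * R ^ m = R ^ m * Mψ by ring]
    apply div_le_div₀ (by positivity) _ hδB0 (hδB ζ hζS)
    exact mul_le_mul_of_nonneg_left (hMψ ζ hζS) (by positivity)
  have htri_ζ : ‖((P t).eval ζ / (Q t).eval ζ - p t)‖ ≤ U₀ := by
    have ht1 : ‖((P t).eval ζ / (Q t).eval ζ - p t)‖
        ≤ ‖((P t).eval ζ / (Q t).eval ζ - A₀.eval ζ / B₀.eval ζ)‖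
          + ‖(A₀.eval ζ / B₀.eval ζ - q)‖ + ‖(q - p t)‖ := by
      have h1 := norm_sub_le_norm_sub_add_norm_sub ((P t).eval ζ / (Q t).eval ζ) (A₀.eval ζ / B₀.eval ζ) (p t)
      have h2 := norm_sub_le_norm_sub_add_norm_sub (A₀.eval ζ / B₀.eval ζ) q (p t)
      linarith
    have ht2 : ‖(q - p t)‖ ≤ η := by
      rw [show q - p t = -(p t - q) by ring, norm_neg]
      exact hdistp
    rw [hU₀def]
    linarith [(hstep4 ζ hζS).2, hφζ, hκhalf, hηhalf]
  -- outer inequality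
  have houter : ‖(c t)‖ * (R / 2) ^ d ≤ ‖((Q t).eval zr)‖ * U₀ := by
    have hz1 : R / 2 ≤ ‖(ζ - p t)‖ := by
      have h1 : ‖(ζ - q)‖ ≤ ‖(ζ - p t)‖ + ‖(p t - q)‖ :=
        norm_sub_le_norm_sub_add_norm_sub _ _ _
      rw [hζdist] at h1
      linarith [hdistp, hηr, hrR2]
    calc ‖(c t)‖ * (R / 2) ^ d
        ≤ ‖(c t)‖ * ‖(ζ - p t)‖ ^ d := by
          apply mul_le_mul_of_nonneg_left _ (norm_nonneg _)
          exact pow_le_pow_left₀ (by positivity) hz1 d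
      _ = ‖((Q t).eval ζ)‖ * ‖((P t).eval ζ / (Q t).eval ζ - p t)‖ :=
          (hQg ζ hζS).symm
      _ ≤ ‖((Q t).eval ζ)‖ * U₀ :=
          mul_le_mul_of_nonneg_left htri_ζ (norm_nonneg _)
      _ ≤ ‖((Q t).eval zr)‖ * U₀ := mul_le_mul_of_nonneg_right hζle hU₀0.le
  -- combine and contradict
  have hfinal : ‖(c t)‖ * ((R / 2) ^ d * (D1 * r ^ m / 2))
      ≤ ‖(c t)‖ * ((2 * r) ^ d * U₀) := by
    calc ‖(c t)‖ * ((R / 2) ^ d * (D1 * r ^ m / 2))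
        = (‖(c t)‖ * (R / 2) ^ d) * (D1 * r ^ m / 2) := by ring
      _ ≤ (‖((Q t).eval zr)‖ * U₀) * (D1 * r ^ m / 2) :=
          mul_le_mul_of_nonneg_right houter (by positivity)
      _ = (‖((Q t).eval zr)‖ * (D1 * r ^ m / 2)) * U₀ := by ring
      _ ≤ (‖(c t)‖ * (2 * r) ^ d) * U₀ :=
          mul_le_mul_of_nonneg_right hinner hU₀0.le
      _ = ‖(c t)‖ * ((2 * r) ^ d * U₀) := by ring
  have hc0 : 0 < ‖(c t)‖ := norm_pos_iff.mpr hct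
  have := mul_lt_mul_of_pos_left hkey hc0
  linarith

end Key

section MainHelpers
open Polynomial Filter Topology

lemma clusterPt_comap_neBot {α : Type*} {q : ℂ} {G : Filter α} {u : α → ℂ}
    (h : ClusterPt q (Filter.map u G)) : (G ⊓ Filter.comap u (𝓝 q)).NeBot := by
  have h1 : (Filter.map u G ⊓ 𝓝 q).NeBot := by
    rw [inf_comm]; exact h
  rw [← Filter.push_pull] at h1
  exact (Filter.map_neBot_iff u).mp h1

/-- not both top coefficients vanish -/
lemma coeff_top_ne {f g : Polynomial ℂ} {n : ℕ} (hn : 0 < n) (hcop : IsCoprime f g)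
    (hmax : max f.natDegree g.natDegree = n) : ¬(f.coeff n = 0 ∧ g.coeff n = 0) := by
  rintro ⟨hf, hg⟩
  have hfne : f ≠ 0 := by
    rintro rfl
    have := Polynomial.natDegree_eq_zero_of_isUnit (isCoprime_zero_left.mp hcop)
    simp [this] at hmax
    omega
  have hgne : g ≠ 0 := by
    rintro rfl
    have := Polynomial.natDegree_eq_zero_of_isUnit (isCoprime_zero_right.mp hcop)
    simp [this] at hmax
    omega
  have h1 : f.natDegree ≠ n := by
    intro he
    exact (Polynomial.leadingCoeff_ne_zero.mpr hfne) (by rw [Polynomial.leadingCoeff, he]; exact hf)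
  have h2 : g.natDegree ≠ n := by
    intro he
    exact (Polynomial.leadingCoeff_ne_zero.mpr hgne) (by rw [Polynomial.leadingCoeff, he]; exact hg)
  rcases max_cases f.natDegree g.natDegree with ⟨h3, _⟩ | ⟨h3, _⟩ <;> omega

end MainHelpers


theorem degenerating_escape_rate_stmt14
    (d : ℕ) (hd : 1 < d) (h : ℂ)
    (A B : Polynomial ℂ) (hABcop : IsCoprime A B)
    (hABdeg : max A.natDegree B.natDegree = d - 1)
    (P Q : ℂ → Polynomial ℂ) (p c : ℂ → ℂ)
    (h_hol : ∀ i : ℕ,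
      DifferentiableOn ℂ (fun t => (P t).coeff i) (Metric.ball (0 : ℂ) 1 \ {0}) ∧
      DifferentiableOn ℂ (fun t => (Q t).coeff i) (Metric.ball (0 : ℂ) 1 \ {0}))
    (h_deg : ∀ t ∈ Metric.ball (0 : ℂ) 1 \ {0},
      IsCoprime (P t) (Q t) ∧ max (P t).natDegree (Q t).natDegree = d)
    (h_super : ∀ t ∈ Metric.ball (0 : ℂ) 1 \ {0},
      c t ≠ 0 ∧ P t - C (p t) * Q t = C (c t) * (X - C (p t)) ^ d)
    (h_conv : ∀ K : Set (ℂ × ℂ), IsCompact K →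
      (∀ v ∈ K, v ≠ ((0 : ℂ), (0 : ℂ)) ∧ v.1 ≠ h * v.2) →
      ∀ ε : ℝ, 0 < ε → ∀ᶠ t in 𝓝[Metric.ball (0 : ℂ) 1 \ {0}] (0 : ℂ), ∀ v ∈ K,
        chordalP1 (homEval (P t) d v, homEval (Q t) d v)
          (homEval A (d - 1) v, homEval B (d - 1) v) < ε) :
    Tendsto p (𝓝[Metric.ball (0 : ℂ) 1 \ {0}] (0 : ℂ)) (𝓝 h) := by

  classical
  set S : Set ℂ := Metric.ball (0 : ℂ) 1 \ {0} with hSdef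
  set F := 𝓝[S] (0 : ℂ) with hFdef
  have hd1 : 1 ≤ d - 1 := by omega
  have hd0 : 0 < d := by omega
  -- facts about A B
  have hAd : A.natDegree ≤ d - 1 := le_trans (le_max_left _ _) hABdeg.le
  have hBd : B.natDegree ≤ d - 1 := le_trans (le_max_right _ _) hABdeg.le
  have hABroot : ∀ z : ℂ, ¬(A.eval z = 0 ∧ B.eval z = 0) := fun z => no_common_root hABcop z
  have hBne : B ≠ 0 := by
    rintro rfl
    have := Polynomial.natDegree_eq_zero_of_isUnit (isCoprime_zero_right.mp hABcop)
    simp [this] at hABdeg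
    omega
  have hAne : A ≠ 0 := by
    rintro rfl
    have := Polynomial.natDegree_eq_zero_of_isUnit (isCoprime_zero_left.mp hABcop)
    simp [this] at hABdeg
    omega
  have hmemS : ∀ᶠ t in F, t ∈ S := eventually_mem_nhdsWithin
  -- eventual identities and degree facts
  have hidF : ∀ᶠ t in F, ∀ z : ℂ,
      (P t).eval z - p t * (Q t).eval z = c t * (z - p t) ^ d := by
    filter_upwards [hmemS] with t ht z
    have h1 := (h_super t ht).2
    have h2 := congrArg (Polynomial.eval z) h1
    simpa using h2
  have hcF : ∀ᶠ t in F, c t ≠ 0 := by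
    filter_upwards [hmemS] with t ht
    exact (h_super t ht).1
  have hrootF : ∀ᶠ t in F, ∀ z : ℂ, ¬((P t).eval z = 0 ∧ (Q t).eval z = 0) := by
    filter_upwards [hmemS] with t ht z
    exact no_common_root (h_deg t ht).1 z
  have hdegF : ∀ᶠ t in F, (P t).natDegree ≤ d ∧ (Q t).natDegree ≤ d := by
    filter_upwards [hmemS] with t ht
    exact ⟨le_trans (le_max_left _ _) (h_deg t ht).2.le,
      le_trans (le_max_right _ _) (h_deg t ht).2.le⟩
  by_contra hcon
  rw [Metric.tendsto_nhds] at hcon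
  push_neg at hcon
  obtain ⟨ε₀, hε₀, hfreq⟩ := hcon
  have hfreq' : ∃ᶠ t in F, ε₀ ≤ dist (p t) h := by
    apply hfreq.mono
    intro t ht
    exact ht
  set G := F ⊓ Filter.principal {t : ℂ | ε₀ ≤ dist (p t) h} with hGdef
  haveI hGne : G.NeBot := Filter.frequently_iff_neBot.mp hfreq'
  have hGF : G ≤ F := inf_le_left
  by_cases hbd : ∃ R₀ : ℝ, ∃ᶠ t in G, ‖p t‖ ≤ R₀
  · -- Case A : bounded cluster point q ≠ h
    obtain ⟨R₀, hfreq2⟩ := hbd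
    set G' := G ⊓ Filter.principal {t : ℂ | ‖p t‖ ≤ R₀} with hG'def
    haveI hG'ne : G'.NeBot := Filter.frequently_iff_neBot.mp hfreq2
    have hG'F : G' ≤ F := le_trans inf_le_left hGF
    have hmap : Filter.map p G' ≤ Filter.principal (Metric.closedBall 0 R₀) := by
      rw [Filter.le_principal_iff, Filter.mem_map]
      have : {t : ℂ | ‖p t‖ ≤ R₀} ∈ G' :=
        Filter.le_principal_iff.mp (inf_le_right : G' ≤ _)
      apply Filter.mem_of_superset this
      intro t ht
      simp only [Set.mem_setOf_eq] at ht
      simp only [Set.mem_preimage, Metric.mem_closedBall, dist_zero_right]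
      exact ht
    obtain ⟨q, hqball, hqcl⟩ := (isCompact_closedBall (0 : ℂ) R₀).exists_clusterPt hmap
    have hqh : ε₀ ≤ dist q h := by
      have hclosed : IsClosed {z : ℂ | ε₀ ≤ dist z h} :=
        isClosed_le continuous_const (continuous_id.dist continuous_const)
      have hmem : {z : ℂ | ε₀ ≤ dist z h} ∈ Filter.map p G' := by
        rw [Filter.mem_map]
        have : {t : ℂ | ε₀ ≤ dist (p t) h} ∈ G' :=
          Filter.le_principal_iff.mp (le_trans (inf_le_left : G' ≤ G) (inf_le_right : G ≤ _))
        exact Filter.mem_of_superset this (fun t ht => ht)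
      have h1 : ClusterPt q (Filter.principal {z : ℂ | ε₀ ≤ dist z h}) :=
        hqcl.mono (Filter.le_principal_iff.mpr hmem)
      have h2 := mem_closure_iff_clusterPt.mpr h1
      rwa [hclosed.closure_eq] at h2
    set H := G' ⊓ Filter.comap p (𝓝 q) with hHdef
    haveI hHne : H.NeBot := clusterPt_comap_neBot hqcl
    have hHF : H ≤ F := le_trans inf_le_left hG'F
    have hpH : Filter.Tendsto p H (𝓝 q) := Filter.tendsto_iff_comap.mpr inf_le_right
    -- key lemma hypotheses
    have hψ : A - Polynomial.C q * B ≠ 0 := by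
      intro h0
      have hAB' : A = Polynomial.C q * B := by linear_combination h0
      have hdvd : B ∣ A := ⟨Polynomial.C q, by rw [hAB', mul_comm]⟩
      have hunit := hABcop.isUnit_of_dvd' hdvd dvd_rfl
      have h1 := Polynomial.natDegree_eq_zero_of_isUnit hunit
      have h2 : A.natDegree ≤ B.natDegree := hAB' ▸ Polynomial.natDegree_C_mul_le q B
      rw [h1] at h2
      have h4 : max A.natDegree B.natDegree ≤ 0 := max_le h2 (le_of_eq h1)
      rw [hABdeg] at h4
      omega
    have hψd : (A - Polynomial.C q * B).natDegree < d := by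
      apply lt_of_le_of_lt (Polynomial.natDegree_sub_le A (Polynomial.C q * B))
      apply lt_of_le_of_lt (max_le hAd (le_trans (Polynomial.natDegree_C_mul_le q B) hBd))
      omega
    refine key_lemma hd q A B hψ hψd hABroot H P Q p c
      (hrootF.filter_mono hHF) (hcF.filter_mono hHF) (hidF.filter_mono hHF) hpH
      (ε₀ / 2) (by linarith) ?_
    intro ε hε
    set K : Set (ℂ × ℂ) := (Metric.closedBall q (ε₀ / 2)) ×ˢ ({1} : Set ℂ) with hKdef
    have hKcomp : IsCompact K := (isCompact_closedBall _ _).prod isCompact_singleton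
    have hKcond : ∀ v ∈ K, v ≠ ((0 : ℂ), (0 : ℂ)) ∧ v.1 ≠ h * v.2 := by
      rintro ⟨z, o⟩ hv
      rw [hKdef, Set.mem_prod] at hv
      obtain ⟨hz, ho⟩ := hv
      simp only [Set.mem_singleton_iff] at ho
      subst ho
      constructor
      · intro hc
        exact one_ne_zero (congrArg Prod.snd hc)
      · simp only [mul_one]
        intro hzh
        rw [Metric.mem_closedBall] at hz
        rw [hzh] at hz
        rw [dist_comm] at hqh
        linarith
    have hev := h_conv K hKcomp hKcond ε hε
    filter_upwards [hev.filter_mono hHF, hdegF.filter_mono hHF] with t hconv' hdeg' z hz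
    have hzK : ((z, 1) : ℂ × ℂ) ∈ K := by
      rw [hKdef, Set.mem_prod]
      exact ⟨hz, rfl⟩
    have h1 := hconv' (z, 1) hzK
    rwa [homEval_eval hdeg'.1, homEval_eval hdeg'.2,
      homEval_eval hAd, homEval_eval hBd] at h1
  · -- Case B : p t → ∞
    push_neg at hbd
    have htop : Filter.Tendsto (fun t => ‖p t‖) G Filter.atTop := by
      rw [Filter.tendsto_atTop]
      intro b
      have h1 := hbd b
      filter_upwards [h1] with t ht
      exact ht.le
    have hpne : ∀ᶠ t in G, p t ≠ 0 := by
      filter_upwards [htop (Filter.eventually_ge_atTop 1)] with t ht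
      intro h0
      rw [Set.mem_preimage, Set.mem_setOf_eq, h0] at ht
      norm_num at ht
    have hpinv : Filter.Tendsto (fun t => (p t)⁻¹) G (𝓝 0) := by
      rw [tendsto_zero_iff_norm_tendsto_zero]
      have heq : (fun t => ‖(p t)⁻¹‖) = fun t => ‖p t‖⁻¹ := by
        funext t; rw [norm_inv]
      rw [heq]
      exact tendsto_inv_atTop_zero.comp htop
    -- reversed data
    set A' := myrev (d - 1) B with hA'def
    set B' := myrev (d - 1) A with hB'def
    set R₁' : ℝ := (1 + 2 * ‖h‖)⁻¹ with hR₁'def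
    have hR₁'0 : 0 < R₁' := by positivity
    have hψ' : A' - Polynomial.C (0 : ℂ) * B' ≠ 0 := by
      simp only [Polynomial.C_0, zero_mul, sub_zero]
      exact fun h0 => hBne (myrev_eq_zero hBd h0)
    have hψd' : (A' - Polynomial.C (0 : ℂ) * B').natDegree < d := by
      simp only [Polynomial.C_0, zero_mul, sub_zero]
      exact lt_of_le_of_lt (natDegree_myrev_le _ _) (by omega)
    have hAB' : ∀ z : ℂ, ¬(A'.eval z = 0 ∧ B'.eval z = 0) := by
      intro z
      by_cases hz : z = 0
      · subst hz
        rw [hA'def, hB'def, eval_myrev_zero, eval_myrev_zero]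
        intro hc
        exact coeff_top_ne (show 0 < d - 1 by omega) hABcop.symm
          (by rw [max_comm]; exact hABdeg) ⟨hc.1, hc.2⟩
      · rintro ⟨h1, h2⟩
        rw [hA'def, eval_myrev_of_ne hBd hz] at h1
        rw [hB'def, eval_myrev_of_ne hAd hz] at h2
        have hzp : z ^ (d - 1) ≠ 0 := pow_ne_zero _ hz
        exact hABroot z⁻¹ ⟨by rcases mul_eq_zero.mp h2 with h | h; exact absurd h hzp; exact h,
          by rcases mul_eq_zero.mp h1 with h | h; exact absurd h hzp; exact h⟩
    have hrootG : ∀ᶠ t in G, ∀ z : ℂ,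
        ¬((myrev d (Q t)).eval z = 0 ∧ (myrev d (P t)).eval z = 0) := by
      filter_upwards [hmemS.filter_mono hGF] with t ht z
      by_cases hz : z = 0
      · subst hz
        rw [eval_myrev_zero, eval_myrev_zero]
        intro hc
        exact coeff_top_ne hd0 (h_deg t ht).1.symm
          (by rw [max_comm]; exact (h_deg t ht).2) ⟨hc.1, hc.2⟩
      · rintro ⟨h1, h2⟩
        have hPd := le_trans (le_max_left _ _) (h_deg t ht).2.le
        have hQd := le_trans (le_max_right _ _) (h_deg t ht).2.le
        rw [eval_myrev_of_ne hQd hz] at h1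
        rw [eval_myrev_of_ne hPd hz] at h2
        have hzp : z ^ d ≠ 0 := pow_ne_zero _ hz
        exact no_common_root (h_deg t ht).1 z⁻¹
          ⟨by rcases mul_eq_zero.mp h2 with hh | hh; exact absurd hh hzp; exact hh,
           by rcases mul_eq_zero.mp h1 with hh | hh; exact absurd hh hzp; exact hh⟩
    have hcoeffd : ∀ᶠ t in G, (P t).coeff d - p t * (Q t).coeff d = c t := by
      filter_upwards [hmemS.filter_mono hGF] with t ht
      have h1 := congrArg (fun f => Polynomial.coeff f d) (h_super t ht).2
      simp only [Polynomial.coeff_sub, Polynomial.coeff_C_mul] at h1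
      rw [h1]
      have h2 : ((Polynomial.X - Polynomial.C (p t)) ^ d).coeff d = 1 := by
        have h3 : ((Polynomial.X - Polynomial.C (p t)) ^ d).Monic :=
          (Polynomial.monic_X_sub_C (p t)).pow d
        have h4 : ((Polynomial.X - Polynomial.C (p t)) ^ d).natDegree = d := by
          rw [Polynomial.natDegree_pow, Polynomial.natDegree_X_sub_C, mul_one]
        have h5 := Polynomial.Monic.coeff_natDegree h3
        rwa [h4] at h5
      rw [h2, mul_one]
    have hcG : ∀ᶠ t in G, -(c t) * (-(p t)) ^ d * (p t)⁻¹ ≠ 0 := by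
      filter_upwards [hcF.filter_mono hGF, hpne] with t h1 h2
      exact mul_ne_zero (mul_ne_zero (neg_ne_zero.mpr h1) (pow_ne_zero _ (neg_ne_zero.mpr h2)))
        (inv_ne_zero h2)
    have hidG : ∀ᶠ t in G, ∀ z : ℂ,
        (myrev d (Q t)).eval z - (p t)⁻¹ * (myrev d (P t)).eval z
          = (-(c t) * (-(p t)) ^ d * (p t)⁻¹) * (z - (p t)⁻¹) ^ d := by
      filter_upwards [hmemS.filter_mono hGF, hidF.filter_mono hGF, hpne, hcoeffd]
        with t ht hid' hpt0 hcd z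
      have hPd := le_trans (le_max_left _ _) (h_deg t ht).2.le
      have hQd := le_trans (le_max_right _ _) (h_deg t ht).2.le
      by_cases hz : z = 0
      · subst hz
        rw [eval_myrev_zero, eval_myrev_zero]
        have hone : (-(p t)) ^ d * (-(p t)⁻¹) ^ d = 1 := by
          rw [← mul_pow, show -(p t) * -(p t)⁻¹ = 1 by field_simp]
          exact one_pow d
        have hinv : p t * (p t)⁻¹ = 1 := mul_inv_cancel₀ hpt0
        rw [show (0 : ℂ) - (p t)⁻¹ = -(p t)⁻¹ by ring,
          show (-(c t) * (-(p t)) ^ d * (p t)⁻¹) * (-(p t)⁻¹) ^ d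
            = -(c t) * (p t)⁻¹ * ((-(p t)) ^ d * (-(p t)⁻¹) ^ d) from by ring, hone]
        linear_combination (-(p t)⁻¹) * hcd + (-((Q t).coeff d)) * hinv
      · rw [eval_myrev_of_ne hQd hz, eval_myrev_of_ne hPd hz]
        have h1 := hid' z⁻¹
        have h2 : z ^ d * (z⁻¹ - p t) ^ d = (1 - p t * z) ^ d := by
          rw [← mul_pow]
          congr 1
          field_simp
        have h3 : (-(p t)) ^ d * (z - (p t)⁻¹) ^ d = (1 - p t * z) ^ d := by
          rw [← mul_pow]
          congr 1
          field_simp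
          ring
        have hinv : p t * (p t)⁻¹ = 1 := mul_inv_cancel₀ hpt0
        rw [show (-(c t) * (-(p t)) ^ d * (p t)⁻¹) * (z - (p t)⁻¹) ^ d
            = -(c t) * (p t)⁻¹ * ((-(p t)) ^ d * (z - (p t)⁻¹) ^ d) from by ring, h3, ← h2]
        linear_combination (-(p t)⁻¹ * z ^ d) * h1 + (-(z ^ d * Polynomial.eval z⁻¹ (Q t))) * hinv
    -- convergence hypothesis in the reversed chart
    have hconvG : ∀ ε : ℝ, 0 < ε → ∀ᶠ t in G, ∀ z ∈ Metric.closedBall (0 : ℂ) R₁',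
        chordalP1 ((myrev d (Q t)).eval z, (myrev d (P t)).eval z)
          (A'.eval z, B'.eval z) < ε := by
      intro ε hε
      set K : Set (ℂ × ℂ) := ({1} : Set ℂ) ×ˢ (Metric.closedBall (0 : ℂ) R₁') with hKdef
      have hKcomp : IsCompact K := isCompact_singleton.prod (isCompact_closedBall _ _)
      have hKcond : ∀ v ∈ K, v ≠ ((0 : ℂ), (0 : ℂ)) ∧ v.1 ≠ h * v.2 := by
        rintro ⟨o, z⟩ hv
        rw [hKdef, Set.mem_prod] at hv
        obtain ⟨ho, hz⟩ := hv
        simp only [Set.mem_singleton_iff] at ho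
        subst ho
        refine ⟨fun hc => one_ne_zero (congrArg Prod.fst hc), ?_⟩
        simp only
        intro h1
        have h2 : ‖(h * z)‖ = 1 := by rw [← h1]; simp
        rw [norm_mul] at h2
        rw [Metric.mem_closedBall] at hz
        have h3 : ‖z‖ ≤ R₁' := by
          rwa [Complex.dist_eq, sub_zero] at hz
        have h4 : ‖h‖ * ‖z‖ ≤ ‖h‖ * R₁' := by
          apply mul_le_mul_of_nonneg_left h3 (norm_nonneg _)
        have h5 : ‖h‖ * R₁' < 1 := by
          rw [hR₁'def]
          rw [mul_inv_lt_iff₀ (by positivity)]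
          linarith [norm_nonneg h]
        linarith
      have hev := h_conv K hKcomp hKcond ε hε
      filter_upwards [hev.filter_mono hGF, hdegF.filter_mono hGF] with t hconv' hdeg' z hz
      have hzK : ((1, z) : ℂ × ℂ) ∈ K := by
        rw [hKdef, Set.mem_prod]
        exact ⟨rfl, hz⟩
      have h1 := hconv' (1, z) hzK
      rw [homEval_myrev (P t) d, homEval_myrev (Q t) d,
        homEval_myrev A (d - 1), homEval_myrev B (d - 1)] at h1
      have h2 := chordal_swap ((myrev d (P t)).eval z, (myrev d (Q t)).eval z)
        ((myrev (d - 1) A).eval z, (myrev (d - 1) B).eval z)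
      simp only at h2
      rw [hA'def, hB'def]
      rw [h2]
      exact h1
    exact key_lemma hd 0 A' B' hψ' hψd' hAB' G (fun t => myrev d (Q t)) (fun t => myrev d (P t))
      (fun t => (p t)⁻¹) (fun t => -(c t) * (-(p t)) ^ d * (p t)⁻¹)
      hrootG hcG hidG hpinv R₁' hR₁'0 hconvG
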